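/- Let X be a Poisson random variable with mean c > 0 and p ∈ (0,1). Then E[(1-p)^X] = e^{-pc}, and e^{-pc} > (⌈c⌉ - c)(1-p)^{⌊c⌋} + (c - ⌊c⌋)(1-p)^{⌈c⌉} whenever c is not an integer or c ≥ 1; i.e., Poisson dispatching yields a strictly lower detection probability than the optimal two-point dispatch distribution. -/
import Mathlib


lemma real_exp_tsum (x : ℝ) : Real.exp x = ∑' n : ℕ, x ^ n / n.factorial := by
  rw [Real.exp_eq_exp_ℝ, NormedSpace.exp_eq_tsum_div]

/-- For `X ~ Poisson(c)`, `E[(1-p)^X] = e^(-pc)`, and this strictly exceeds the minimal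
exponential moment `(1-r)(1-p)^⌊c⌋ + r(1-p)^(⌊c⌋+1)` (with `r = c - ⌊c⌋`) whenever `c` is not
an integer or `c ≥ 1`. -/
theorem poisson_strictly_suboptimal
    (c p : ℝ) (hc : 0 < c) (hp : 0 < p) (hp1 : p < 1)
    (h : (⌊c⌋₊ : ℝ) ≠ c ∨ 1 ≤ c) :
    (∑' n : ℕ, (Real.exp (-c) * c ^ n / n.factorial) * (1 - p) ^ n = Real.exp (-(p * c))) ∧
    Real.exp (-(p * c))
      > (1 - (c - ⌊c⌋₊)) * (1 - p) ^ ⌊c⌋₊ + (c - ⌊c⌋₊) * (1 - p) ^ (⌊c⌋₊ + 1) := by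
  constructor
  · have hterm : ∀ n : ℕ, (Real.exp (-c) * c ^ n / n.factorial) * (1 - p) ^ n
        = Real.exp (-c) * ((c * (1 - p)) ^ n / n.factorial) := by
      intro n; rw [mul_pow]; ring
    rw [tsum_congr hterm, tsum_mul_left, ← real_exp_tsum, ← Real.exp_add]
    ring_nf
  · set m := ⌊c⌋₊ with hm
    set r := c - m with hr
    have hr0 : 0 ≤ r := by
      have := Nat.floor_le hc.le
      simp [hr]; linarith
    have hr1 : r < 1 := by
      have := Nat.lt_floor_add_one c
      simp [hr]; linarith
    have hpr1 : p * r < 1 := by nlinarith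
    have h1p : (0:ℝ) ≤ 1 - p := by linarith
    have hle : 1 - p ≤ Real.exp (-p) := by
      have := Real.add_one_le_exp (-p); linarith
    have hlt : 1 - p < Real.exp (-p) := by
      have := Real.add_one_lt_exp (x := -p) (by linarith); linarith
    have hlepr : 1 - p * r ≤ Real.exp (-(p * r)) := by
      have := Real.add_one_le_exp (-(p * r)); linarith
    have hRHS : (1 - (c - m)) * (1 - p) ^ m + (c - m) * (1 - p) ^ (m + 1)
        = (1 - p) ^ m * (1 - p * r) := by
      rw [pow_succ]; ring
    have hsplit : Real.exp (-(p * c)) = Real.exp (-(p * m)) * Real.exp (-(p * r)) := by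
      rw [← Real.exp_add]; congr 1; simp [hr]; ring
    have hpowle : (1 - p) ^ m ≤ Real.exp (-(p * m)) := by
      calc (1 - p) ^ m ≤ (Real.exp (-p)) ^ m := pow_le_pow_left₀ h1p hle m
        _ = Real.exp (-(p * m)) := by rw [← Real.exp_nat_mul]; ring_nf
    rw [hRHS, hsplit]
    rcases h with hne | hge
    · have hrpos : 0 < r := lt_of_le_of_ne hr0 (by intro e; exact hne (by simp [hr] at e ⊢; linarith))
      have hltpr : 1 - p * r < Real.exp (-(p * r)) := by
        have hne0 : -(p * r) ≠ 0 := by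
          have : 0 < p * r := mul_pos hp hrpos
          linarith
        have := Real.add_one_lt_exp hne0
        linarith
      exact mul_lt_mul' hpowle hltpr (by linarith) (Real.exp_pos _)
    · have hm1 : 1 ≤ m := Nat.one_le_floor_iff _ |>.mpr hge
      have hpowlt : (1 - p) ^ m < Real.exp (-(p * m)) := by
        calc (1 - p) ^ m < (Real.exp (-p)) ^ m :=
              pow_lt_pow_left₀ hlt h1p (by omega)
          _ = Real.exp (-(p * m)) := by rw [← Real.exp_nat_mul]; ring_nf
      exact mul_lt_mul hpowlt hlepr (by nlinarith) (Real.exp_pos _).le
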